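/- Let Φ be a semi-coherent structure function on n ≥ 1 components with structural signature s, let T_1,…,T_n be i.i.d. exponential random variables with rate μ > 0, let T_fail := inf{ t ≥ 0 : Φ(1{T_1 > t},…,1{T_n > t}) = 0 }, and fix r ∈ {1,…,n}. Set T_rep := min{T_fail, T_{r:n}} and let N(T_rep) := #{ i : T_i ≤ T_rep } be the number of failed components at the first repair. Given repair costs c_cmp : {1,…,n} → ℝ and c_sys ∈ ℝ, define the first-cycle cost C := c_cmp(N(T_rep)) + c_sys·1{T_fail ≤ T_{r:n}}. Then E[C] = Σ_{k=1}^{r} s_k·( c_sys + c_cmp(k) ) + ( Σ_{k=r+1}^{n} s_k )·c_cmp(r). -/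

import Mathlib

open MeasureTheory ProbabilityTheory

/-- `S̄ k`: the proportion of states with exactly `k` failed components in which
the system works. -/
noncomputable def Sbar (n : ℕ) (Φ : (Fin n → Bool) → Bool) (k : ℕ) : ℝ :=
  ((Finset.univ.filter (fun x : Fin n → Bool =>
      (Finset.univ.filter (fun i => x i = false)).card = k ∧ Φ x = true)).card : ℝ) /
    (n.choose k : ℝ)

/-- The structural signature `s k = S̄_{k-1} - S̄_k`. -/
noncomputable def structSig (n : ℕ) (Φ : (Fin n → Bool) → Bool) (k : ℕ) : ℝ :=
  Sbar n Φ (k - 1) - Sbar n Φ k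

/-- The `k`-th order statistic (`k : Fin n`, 0-based) of a tuple `x : Fin n → ℝ`. -/
noncomputable def orderStat (n : ℕ) (x : Fin n → ℝ) (k : Fin n) : ℝ :=
  x (Tuple.sort x k)

/-- The system failure time: the first nonnegative time at which the structure
function evaluated at the vector of component states (component `i` works at time `t`
iff `t < x i`) is `0`. -/
noncomputable def failTime (n : ℕ) (Φ : (Fin n → Bool) → Bool) (x : Fin n → ℝ) : ℝ :=
  sInf {t : ℝ | 0 ≤ t ∧ Φ (fun i => decide (t < x i)) = false}

namespace Stmt15aux
open Finset

/-- helper: count of elements with rank `< k` under a permutation. -/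
lemma card_filter_rank_lt (n k : ℕ) (hk : k ≤ n) (e : Equiv.Perm (Fin n)) :
    (Finset.univ.filter (fun i : Fin n => ((e i : ℕ) < k))).card = k := by
  have h1 : (Finset.univ.filter (fun i : Fin n => ((e i : ℕ) < k))).card
      = (Finset.univ.filter (fun j : Fin n => ((j : ℕ) < k))).card := by
    apply Finset.card_bij (fun i _ => e i)
    · intro a ha; simp only [mem_filter, mem_univ, true_and] at ha ⊢; exact ha
    · intro a _ b _ hab; exact e.injective hab
    · intro b hb; refine ⟨e.symm b, ?_, by simp⟩
      simp only [mem_filter, mem_univ, true_and] at hb ⊢; simpa using hb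
  rw [h1]
  apply Finset.card_eq_of_bijective (fun i h => (⟨i, h.trans_le hk⟩ : Fin n))
  · intro a ha; simp only [mem_filter, mem_univ, true_and] at ha
    exact ⟨a, ha, rfl⟩
  · intro i h; simp [h]
  · intro i j hi hj hij; simpa using congrArg Fin.val hij

/-- count of permutations sending `{j | j < k}` exactly onto a given set `Z`. -/
lemma count_perm_maps (n k : ℕ) (hk : k ≤ n) (Z : Finset (Fin n)) (hZ : Z.card = k) :
    (Finset.univ.filter (fun π : Equiv.Perm (Fin n) =>
        ∀ j : Fin n, ((j : ℕ) < k ↔ π j ∈ Z))).card = Nat.factorial k * Nat.factorial (n - k) := by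
  classical
  rw [← Fintype.card_subtype]
  have hcard1 : Fintype.card {j : Fin n // (j : ℕ) < k} = k := by
    rw [Fintype.card_subtype]; exact card_filter_rank_lt n k hk (Equiv.refl _)
  have hcard2 : Fintype.card {i : Fin n // i ∈ Z} = k := by
    rw [Fintype.card_coe]; exact hZ
  have hcard3 : Fintype.card {j : Fin n // ¬ ((j : ℕ) < k)} = n - k := by
    rw [Fintype.card_subtype_compl, hcard1, Fintype.card_fin]
  have hcard4 : Fintype.card {i : Fin n // i ∉ Z} = n - k := by
    rw [Fintype.card_subtype_compl, hcard2, Fintype.card_fin]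
  have key : Fintype.card {π : Equiv.Perm (Fin n) // ∀ j : Fin n, ((j : ℕ) < k ↔ π j ∈ Z)}
      = Fintype.card (({j : Fin n // (j : ℕ) < k} ≃ {i : Fin n // i ∈ Z})
        × ({j : Fin n // ¬ ((j : ℕ) < k)} ≃ {i : Fin n // i ∉ Z})) := by
    apply Fintype.card_of_bijective
      (f := fun π : {π : Equiv.Perm (Fin n) // ∀ j : Fin n, ((j : ℕ) < k ↔ π j ∈ Z)} =>
        ((Equiv.subtypeEquiv π.1 (fun j => π.2 j) :
            {j : Fin n // (j : ℕ) < k} ≃ {i : Fin n // i ∈ Z}),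
         (Equiv.subtypeEquiv π.1 (fun j => not_iff_not.mpr (π.2 j)) :
            {j : Fin n // ¬ ((j : ℕ) < k)} ≃ {i : Fin n // i ∉ Z})))
    constructor
    · rintro ⟨π, hπ⟩ ⟨π', hπ'⟩ h
      simp only [Prod.mk.injEq] at h
      obtain ⟨h1, h2⟩ := h
      apply Subtype.ext
      ext j
      by_cases hj : (j : ℕ) < k
      · have := congrArg (fun e => (e ⟨j, hj⟩ : Fin n)) h1
        exact congrArg Fin.val (by simpa using this)
      · have := congrArg (fun e => (e ⟨j, hj⟩ : Fin n)) h2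
        exact congrArg Fin.val (by simpa using this)
    · rintro ⟨f, g⟩
      set σ : Equiv.Perm (Fin n) := Equiv.subtypeCongr f g with hσ
      have hval : ∀ j : Fin n, (hj : (j : ℕ) < k) → σ j = (f ⟨j, hj⟩ : Fin n) := by
        intro j hj
        rw [hσ]; simp only [Equiv.subtypeCongr, Equiv.trans_apply, Equiv.sumCongr_apply]
        rw [Equiv.sumCompl_symm_apply_of_pos (p := fun x : Fin n => (x:ℕ) < k) hj]; simp
      have hval' : ∀ j : Fin n, (hj : ¬ ((j : ℕ) < k)) → σ j = (g ⟨j, hj⟩ : Fin n) := by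
        intro j hj
        rw [hσ]; simp only [Equiv.subtypeCongr, Equiv.trans_apply, Equiv.sumCongr_apply]
        rw [Equiv.sumCompl_symm_apply_of_neg (p := fun x : Fin n => (x:ℕ) < k) hj]; simp
      have hprop : ∀ j : Fin n, ((j : ℕ) < k ↔ σ j ∈ Z) := by
        intro j
        by_cases hj : (j : ℕ) < k
        · simp only [hj, true_iff, hval j hj]; exact (f ⟨j, hj⟩).2
        · simp only [hj, false_iff, hval' j hj]; exact (g ⟨j, hj⟩).2
      refine ⟨⟨σ, hprop⟩, ?_⟩
      simp only [Prod.mk.injEq]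
      constructor
      · ext j; simp [Equiv.subtypeEquiv, hval j.1 j.2]
      · ext j; simp [Equiv.subtypeEquiv, hval' j.1 j.2]
  rw [key, Fintype.card_prod, Fintype.card_equiv (Fintype.equivOfCardEq (by rw [hcard1, hcard2])),
    Fintype.card_equiv (Fintype.equivOfCardEq (by rw [hcard3, hcard4])), hcard1, hcard3]

/-- component states after the first `k` (in the order given by `π`) have failed. -/
def D (n : ℕ) (π : Equiv.Perm (Fin n)) (k : ℕ) : Fin n → Bool :=
  fun i => decide (k ≤ (π.symm i : ℕ))

/-- index (number of failures) at which the system fails, when components fail in order `π`. -/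
noncomputable def Kp (n : ℕ) (Φ : (Fin n → Bool) → Bool) (π : Equiv.Perm (Fin n)) : ℕ :=
  sInf {k | 1 ≤ k ∧ Φ (D n π k) = false}

section KpProps

variable {n : ℕ} {Φ : (Fin n → Bool) → Bool} (π : Equiv.Perm (Fin n))

lemma D_antitone (hmono : ∀ x y : Fin n → Bool, (∀ i, x i ≤ y i) → Φ x ≤ Φ y)
    {k l : ℕ} (hkl : k ≤ l) : Φ (D n π l) ≤ Φ (D n π k) := by
  apply hmono
  intro i
  simp only [D]
  by_cases h : l ≤ (π.symm i : ℕ)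
  · simp [h, le_trans hkl h]
  · simp [h]

lemma D_n_eq : D n π n = fun _ => false := by
  funext i
  simp only [D, decide_eq_false_iff_not, not_le]
  exact (π.symm i).2

lemma Kp_mem (hn : 1 ≤ n) (hΦ0 : Φ (fun _ => false) = false) :
    1 ≤ Kp n Φ π ∧ Φ (D n π (Kp n Φ π)) = false := by
  apply Nat.sInf_mem (s := {k | 1 ≤ k ∧ Φ (D n π k) = false})
  exact ⟨n, hn, by rw [D_n_eq]; exact hΦ0⟩

lemma Kp_le_n (hn : 1 ≤ n) (hΦ0 : Φ (fun _ => false) = false) : Kp n Φ π ≤ n :=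
  Nat.sInf_le ⟨hn, by rw [D_n_eq]; exact hΦ0⟩

lemma Kp_le_iff (hn : 1 ≤ n) (hmono : ∀ x y : Fin n → Bool, (∀ i, x i ≤ y i) → Φ x ≤ Φ y)
    (hΦ0 : Φ (fun _ => false) = false) (hΦ1 : Φ (fun _ => true) = true) (k : ℕ) :
    Kp n Φ π ≤ k ↔ Φ (D n π k) = false := by
  constructor
  · intro h
    have h2 := D_antitone π hmono h
    rw [(Kp_mem π hn hΦ0).2] at h2
    exact le_antisymm (by simpa using h2) (Bool.false_le _)
  · intro h
    rcases Nat.eq_zero_or_pos k with hk | hk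
    · exfalso
      have : D n π k = fun _ => true := by
        funext i; simp [D, hk]
      rw [this, hΦ1] at h; simp at h
    · exact Nat.sInf_le ⟨hk, h⟩

lemma Kp_eq_iff (hn : 1 ≤ n) (hmono : ∀ x y : Fin n → Bool, (∀ i, x i ≤ y i) → Φ x ≤ Φ y)
    (hΦ0 : Φ (fun _ => false) = false) (hΦ1 : Φ (fun _ => true) = true) (k : ℕ) (hk : 1 ≤ k) :
    Kp n Φ π = k ↔ (Φ (D n π (k-1)) = true ∧ Φ (D n π k) = false) := by
  constructor
  · rintro rfl
    refine ⟨?_, (Kp_mem π hn hΦ0).2⟩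
    by_contra h
    have h2 : Φ (D n π (Kp n Φ π - 1)) = false := by
      cases hb : Φ (D n π (Kp n Φ π - 1)) with
      | false => rfl
      | true => exact absurd hb h
    have := (Kp_le_iff π hn hmono hΦ0 hΦ1 (Kp n Φ π - 1)).mpr h2
    omega
  · rintro ⟨h1, h2⟩
    have hle := (Kp_le_iff π hn hmono hΦ0 hΦ1 k).mpr h2
    have hgt : ¬ (Kp n Φ π ≤ k - 1) := by
      intro hc
      rw [Kp_le_iff π hn hmono hΦ0 hΦ1] at hc
      rw [hc] at h1; simp at h1
    omega

end KpProps

section Counting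

open Finset

variable (n : ℕ) (Φ : (Fin n → Bool) → Bool)

/-- number of working states with exactly `k` failed components. -/
def W (k : ℕ) : ℕ :=
  (Finset.univ.filter (fun y : Fin n → Bool =>
      (Finset.univ.filter (fun i => y i = false)).card = k ∧ Φ y = true)).card

lemma card_D_true (k : ℕ) (hk : k ≤ n) :
    (Finset.univ.filter (fun π : Equiv.Perm (Fin n) => Φ (D n π k) = true)).card
      = W n Φ k * (Nat.factorial k * Nat.factorial (n - k)) := by
  classical
  have hzeros : ∀ π : Equiv.Perm (Fin n),
      (Finset.univ.filter (fun i => D n π k i = false)).card = k := by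
    intro π
    have : (Finset.univ.filter (fun i => D n π k i = false))
        = (Finset.univ.filter (fun i : Fin n => ((π.symm i : ℕ) < k))) := by
      apply Finset.filter_congr; intro i _; simp [D, not_le]
    rw [this]
    exact card_filter_rank_lt n k hk π.symm
  have hmaps : ∀ π ∈ Finset.univ.filter (fun π : Equiv.Perm (Fin n) => Φ (D n π k) = true),
      D n π k ∈ Finset.univ.filter (fun y : Fin n → Bool =>
        (Finset.univ.filter (fun i => y i = false)).card = k ∧ Φ y = true) := by
    intro π hπ
    simp only [mem_filter, mem_univ, true_and] at hπ ⊢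
    exact ⟨hzeros π, hπ⟩
  rw [Finset.card_eq_sum_ones, ← Finset.sum_fiberwise_of_maps_to hmaps (fun _ => (1:ℕ))]
  have hfiber : ∀ y ∈ Finset.univ.filter (fun y : Fin n → Bool =>
      (Finset.univ.filter (fun i => y i = false)).card = k ∧ Φ y = true),
      ∑ _π ∈ (Finset.univ.filter (fun π : Equiv.Perm (Fin n) => Φ (D n π k) = true)).filter
          (fun π => D n π k = y), (1:ℕ)
        = Nat.factorial k * Nat.factorial (n - k) := by
    intro y hy
    simp only [mem_filter, mem_univ, true_and] at hy
    rw [Finset.sum_const, smul_eq_mul, mul_one]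
    have hset : (Finset.univ.filter (fun π : Equiv.Perm (Fin n) => Φ (D n π k) = true)).filter
          (fun π => D n π k = y)
        = Finset.univ.filter (fun π : Equiv.Perm (Fin n) =>
            ∀ j : Fin n, ((j : ℕ) < k ↔ π j ∈ Finset.univ.filter (fun i => y i = false))) := by
      ext π
      simp only [mem_filter, mem_univ, true_and]
      constructor
      · rintro ⟨hT, hDy⟩
        intro j
        rw [← hDy]
        simp [D, not_le]
      · intro hm
        have hDy : D n π k = y := by
          funext i
          have h := hm (π.symm i)
          simp only [Equiv.apply_symm_apply, mem_filter, mem_univ, true_and] at h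
          cases hyi : y i with
          | false =>
            simp [hyi] at h
            simp only [D, decide_eq_false_iff_not, not_le]
            omega
          | true =>
            simp [hyi] at h
            simp only [D, decide_eq_true_eq]
            omega
        exact ⟨by rw [hDy]; exact hy.2, hDy⟩
    rw [hset]
    exact count_perm_maps n k hk _ hy.1
  rw [Finset.sum_congr rfl hfiber, Finset.sum_const, smul_eq_mul]
  rfl

lemma card_Kp_eq (hn : 1 ≤ n)
    (hmono : ∀ x y : Fin n → Bool, (∀ i, x i ≤ y i) → Φ x ≤ Φ y)
    (hΦ0 : Φ (fun _ => false) = false) (hΦ1 : Φ (fun _ => true) = true)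
    (k : ℕ) (hk1 : 1 ≤ k) (hkn : k ≤ n) :
    ((Finset.univ.filter (fun π : Equiv.Perm (Fin n) => Kp n Φ π = k)).card : ℝ)
      = structSig n Φ k * (Nat.factorial n) := by
  classical
  have hWS : ∀ m, m ≤ n → (W n Φ m : ℝ) * (Nat.factorial m * Nat.factorial (n - m))
      = Sbar n Φ m * Nat.factorial n := by
    intro m hm
    have hC : (n.choose m : ℝ) ≠ 0 := Nat.cast_ne_zero.mpr (Nat.choose_pos hm).ne'
    have hfact : ((n.choose m : ℝ)) * (Nat.factorial m) * (Nat.factorial (n - m))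
        = Nat.factorial n := by
      exact_mod_cast congrArg (Nat.cast : ℕ → ℝ) (Nat.choose_mul_factorial_mul_factorial hm)
    have hSbar : Sbar n Φ m = (W n Φ m : ℝ) / (n.choose m) := rfl
    rw [hSbar]
    field_simp
    rw [← hfact]
    ring
  have hsubset : Finset.univ.filter (fun π : Equiv.Perm (Fin n) => Φ (D n π k) = true)
      ⊆ Finset.univ.filter (fun π : Equiv.Perm (Fin n) => Φ (D n π (k-1)) = true) := by
    intro π hπ
    simp only [Finset.mem_filter, Finset.mem_univ, true_and] at hπ ⊢
    have h2 := D_antitone π hmono (Nat.sub_le k 1)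
    rw [hπ] at h2
    exact le_antisymm (Bool.le_true _) h2
  have hsd : Finset.univ.filter (fun π : Equiv.Perm (Fin n) => Kp n Φ π = k)
      = Finset.univ.filter (fun π : Equiv.Perm (Fin n) => Φ (D n π (k-1)) = true)
        \ Finset.univ.filter (fun π : Equiv.Perm (Fin n) => Φ (D n π k) = true) := by
    ext π
    simp only [Finset.mem_sdiff, Finset.mem_filter, Finset.mem_univ, true_and]
    rw [Kp_eq_iff π hn hmono hΦ0 hΦ1 k hk1]
    constructor
    · rintro ⟨h1, h2⟩; exact ⟨h1, by simp [h2]⟩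
    · rintro ⟨h1, h2⟩
      refine ⟨h1, ?_⟩
      cases h : Φ (D n π k) with
      | false => rfl
      | true => exact absurd h h2
  rw [hsd, Finset.card_sdiff_of_subset hsubset]
  rw [Nat.cast_sub (Finset.card_le_card hsubset)]
  rw [card_D_true n Φ k hkn, card_D_true n Φ (k-1) (le_trans (Nat.sub_le k 1) hkn)]
  push_cast
  rw [hWS k hkn, hWS (k-1) (le_trans (Nat.sub_le k 1) hkn)]
  rw [structSig]
  ring

end Counting

section Deterministic

variable {n : ℕ} {Φ : (Fin n → Bool) → Bool} {x : Fin n → ℝ} {π : Equiv.Perm (Fin n)}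

lemma orderStat_eq (hsm : StrictMono (x ∘ π)) (k : Fin n) : orderStat n x k = x (π k) := by
  have h : x ∘ π = x ∘ Tuple.sort x := Tuple.comp_sort_eq_comp_iff_monotone.mpr hsm.monotone
  have := congrFun h k
  simp only [Function.comp] at this
  rw [orderStat, ← this]

lemma rank_lt_iff (hsm : StrictMono (x ∘ π)) (i : Fin n) (m : Fin n) :
    x (π m) < x i ↔ m < π.symm i := by
  conv_lhs => rw [show x i = x (π (π.symm i)) by rw [Equiv.apply_symm_apply]]
  exact hsm.lt_iff_lt (a := m) (b := π.symm i)

lemma state_eq_D (hsm : StrictMono (x ∘ π)) (k : ℕ) (hk1 : 1 ≤ k) (hkn : k ≤ n) :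
    (fun i => decide (x (π ⟨k - 1, Nat.sub_one_lt_of_le hk1 hkn⟩) < x i)) = D n π k := by
  funext i
  simp only [D, decide_eq_decide]
  rw [rank_lt_iff hsm i ⟨k - 1, by omega⟩, Fin.lt_def]
  simp only []
  omega

lemma failTime_eq (hn : 1 ≤ n)
    (hmono : ∀ x y : Fin n → Bool, (∀ i, x i ≤ y i) → Φ x ≤ Φ y)
    (hΦ0 : Φ (fun _ => false) = false) (hΦ1 : Φ (fun _ => true) = true)
    (hsm : StrictMono (x ∘ π)) (hpos : ∀ i, 0 < x i) :
    failTime n Φ x = x (π ⟨Kp n Φ π - 1, by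
      have := Kp_le_n (Φ := Φ) π hn hΦ0
      have := (Kp_mem (Φ := Φ) π hn hΦ0).1
      omega⟩) := by
  have hK1 := (Kp_mem (Φ := Φ) π hn hΦ0).1
  have hKn := Kp_le_n (Φ := Φ) π hn hΦ0
  set K := Kp n Φ π with hK
  apply IsLeast.csInf_eq
  constructor
  · refine ⟨(hpos _).le, ?_⟩
    rw [state_eq_D hsm K hK1 hKn]
    exact (Kp_mem (Φ := Φ) π hn hΦ0).2
  · rintro t ⟨ht0, htf⟩
    by_contra hlt
    push_neg at hlt
    have hstate : ∀ i, D n π (K - 1) i ≤ decide (t < x i) := by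
      intro i
      cases hD : D n π (K - 1) i with
      | false => exact Bool.false_le _
      | true =>
        simp only [D, decide_eq_true_eq] at hD
        have hle : x (π ⟨K - 1, by omega⟩) ≤ x i := by
          conv_rhs => rw [show x i = x (π (π.symm i)) by rw [Equiv.apply_symm_apply]]
          exact hsm.monotone (by rw [Fin.le_def]; exact hD)
        have : t < x i := lt_of_lt_of_le hlt hle
        simp [this]
    have hΦle := hmono _ _ hstate
    rw [htf] at hΦle
    have hfalse : Φ (D n π (K - 1)) = false := le_antisymm hΦle (Bool.false_le _)
    have := (Kp_le_iff (Φ := Φ) π hn hmono hΦ0 hΦ1 (K - 1)).mpr hfalse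
    omega

lemma card_le_orderStat (hsm : StrictMono (x ∘ π)) (m : ℕ) (hm1 : 1 ≤ m) (hmn : m ≤ n) :
    (Finset.univ.filter (fun i => x i ≤ x (π ⟨m - 1, Nat.sub_one_lt_of_le hm1 hmn⟩))).card = m := by
  have hco : (Finset.univ.filter (fun i => x i ≤ x (π ⟨m - 1, by omega⟩)))
      = (Finset.univ.filter (fun i : Fin n => ((π.symm i : ℕ) < m))) := by
    apply Finset.filter_congr
    intro i _
    rw [← not_lt, rank_lt_iff hsm i ⟨m - 1, by omega⟩, Fin.lt_def]
    simp only []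
    constructor
    · intro h; omega
    · intro h; omega
  rw [hco]
  exact card_filter_rank_lt n m hmn π.symm

lemma cost_eq (hn : 1 ≤ n)
    (hmono : ∀ x y : Fin n → Bool, (∀ i, x i ≤ y i) → Φ x ≤ Φ y)
    (hΦ0 : Φ (fun _ => false) = false) (hΦ1 : Φ (fun _ => true) = true)
    (hsm : StrictMono (x ∘ π)) (hpos : ∀ i, 0 < x i)
    (r : ℕ) (hr1 : 1 ≤ r) (hrn : r ≤ n) (ccmp : ℕ → ℝ) (csys : ℝ) :
    ccmp ((Finset.univ.filter (fun i : Fin n =>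
        x i ≤ min (failTime n Φ x) (orderStat n x ⟨r - 1, Nat.sub_one_lt_of_le hr1 hrn⟩))).card) +
      csys * (if failTime n Φ x ≤ orderStat n x ⟨r - 1, Nat.sub_one_lt_of_le hr1 hrn⟩ then (1 : ℝ) else 0)
    = (if Kp n Φ π ≤ r then csys + ccmp (Kp n Φ π) else ccmp r) := by
  have hK1 := (Kp_mem (Φ := Φ) π hn hΦ0).1
  have hKn := Kp_le_n (Φ := Φ) π hn hΦ0
  set K := Kp n Φ π with hKdef
  rw [orderStat_eq hsm, failTime_eq hn hmono hΦ0 hΦ1 hsm hpos]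
  by_cases hKr : K ≤ r
  · have hle : x (π ⟨K - 1, by omega⟩) ≤ x (π ⟨r - 1, by omega⟩) :=
      hsm.monotone (Fin.mk_le_mk.mpr (by omega))
    rw [if_pos hle, min_eq_left hle, if_pos hKr, card_le_orderStat hsm K hK1 hKn]
    ring
  · push_neg at hKr
    have hlt : x (π ⟨r - 1, by omega⟩) < x (π ⟨K - 1, by omega⟩) :=
      hsm (Fin.mk_lt_mk.mpr (by omega))
    rw [if_neg (not_le.mpr hlt), min_eq_right hlt.le, if_neg (by omega),
      card_le_orderStat hsm r hr1 hrn]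
    ring

end Deterministic

section Prob

open MeasureTheory ProbabilityTheory

variable {Ω : Type*} [MeasurableSpace Ω] {Pr : Measure Ω} [IsProbabilityMeasure Pr]
variable {n : ℕ} {T : Fin n → Ω → ℝ} {μ : ℝ}

lemma map_Iic (hμ : 0 < μ) (hmeas : ∀ i, Measurable (T i))
    (hexp : ∀ (i : Fin n) (t : ℝ), 0 ≤ t →
      Pr {ω | t < T i ω} = ENNReal.ofReal (Real.exp (-μ * t)))
    (i : Fin n) (t : ℝ) :
    Measure.map (T i) Pr (Set.Iic t)
      = (if 0 ≤ t then 1 - ENNReal.ofReal (Real.exp (-μ * t)) else 0) := by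
  have hIoi : ∀ u : ℝ, Pr (T i ⁻¹' Set.Ioi u) = Pr {ω | u < T i ω} := by
    intro u; rfl
  have hms : ∀ u : ℝ, MeasurableSet (T i ⁻¹' Set.Ioi u) := fun u =>
    (hmeas i) measurableSet_Ioi
  rw [Measure.map_apply (hmeas i) measurableSet_Iic]
  have hcompl : T i ⁻¹' Set.Iic t = (T i ⁻¹' Set.Ioi t)ᶜ := by
    ext ω; simp [not_lt]
  rw [hcompl, measure_compl (hms t) (measure_ne_top _ _), measure_univ]
  by_cases ht : 0 ≤ t
  · rw [if_pos ht, hIoi, hexp i t ht]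
  · rw [if_neg ht]
    have h0 : Pr (T i ⁻¹' Set.Ioi t) = 1 := by
      have h1 : Pr (T i ⁻¹' Set.Ioi (0:ℝ)) = 1 := by
        rw [hIoi, hexp i 0 le_rfl]; simp
      refine le_antisymm prob_le_one ?_
      rw [← h1]
      exact measure_mono (fun ω hω => lt_trans (lt_of_not_ge ht) hω)
    rw [h0, tsub_self]

lemma marginal_eq (hμ : 0 < μ) (hmeas : ∀ i, Measurable (T i))
    (hexp : ∀ (i : Fin n) (t : ℝ), 0 ≤ t →
      Pr {ω | t < T i ω} = ENNReal.ofReal (Real.exp (-μ * t)))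
    (i j : Fin n) : Measure.map (T i) Pr = Measure.map (T j) Pr := by
  haveI : IsProbabilityMeasure (Measure.map (T i) Pr) :=
    Measure.isProbabilityMeasure_map (hmeas i).aemeasurable
  apply Measure.ext_of_Iic
  intro a
  rw [map_Iic hμ hmeas hexp i a, map_Iic hμ hmeas hexp j a]

lemma joint_law (hμ : 0 < μ) (hmeas : ∀ i, Measurable (T i))
    (hindep : iIndepFun T Pr)
    (hexp : ∀ (i : Fin n) (t : ℝ), 0 ≤ t →
      Pr {ω | t < T i ω} = ENNReal.ofReal (Real.exp (-μ * t)))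
    (i₀ : Fin n) (π : Equiv.Perm (Fin n)) :
    Measure.map (fun ω (i : Fin n) => T (π i) ω) Pr
      = Measure.pi (fun _ => Measure.map (T i₀) Pr) := by
  haveI : ∀ i : Fin n, IsProbabilityMeasure (Measure.map (T i) Pr) := fun i =>
    Measure.isProbabilityMeasure_map (hmeas i).aemeasurable
  symm
  apply Measure.pi_eq
  intro s hs
  have hmp : Measurable (fun ω (i : Fin n) => T (π i) ω) :=
    measurable_pi_lambda _ (fun i => hmeas (π i))
  rw [Measure.map_apply hmp (MeasurableSet.univ_pi hs)]
  have hpre : (fun ω (i : Fin n) => T (π i) ω) ⁻¹' (Set.univ.pi s)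
      = ⋂ j ∈ (Finset.univ : Finset (Fin n)), T j ⁻¹' s (π.symm j) := by
    ext ω
    simp only [Set.mem_preimage, Set.mem_univ_pi, Set.mem_iInter, Finset.mem_univ,
      Set.mem_preimage, forall_const]
    constructor
    · intro h j
      have := h (π.symm j)
      rwa [Equiv.apply_symm_apply] at this
    · intro h i
      have := h (π i)
      rwa [Equiv.symm_apply_apply] at this
  rw [hpre, hindep.measure_inter_preimage_eq_mul Finset.univ
    (sets := fun j => s (π.symm j)) (fun j _ => hs (π.symm j))]
  have : ∀ j : Fin n, Pr (T j ⁻¹' s (π.symm j))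
      = Measure.map (T i₀) Pr (s (π.symm j)) := by
    intro j
    rw [marginal_eq hμ hmeas hexp i₀ j, Measure.map_apply (hmeas j) (hs (π.symm j))]
  rw [Finset.prod_congr rfl (fun j _ => this j)]
  exact Equiv.prod_comp π.symm (fun j => Measure.map (T i₀) Pr (s j))

lemma no_atoms (hμ : 0 < μ) (hmeas : ∀ i, Measurable (T i))
    (hexp : ∀ (i : Fin n) (t : ℝ), 0 ≤ t →
      Pr {ω | t < T i ω} = ENNReal.ofReal (Real.exp (-μ * t)))
    (i : Fin n) (a : ℝ) : Measure.map (T i) Pr {a} = 0 := by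
  set ν := Measure.map (T i) Pr with hν
  haveI : IsProbabilityMeasure ν := Measure.isProbabilityMeasure_map (hmeas i).aemeasurable
  have hIoi : ∀ u : ℝ, 0 ≤ u → ν (Set.Ioi u) = ENNReal.ofReal (Real.exp (-μ * u)) := by
    intro u hu
    rw [hν, Measure.map_apply (hmeas i) measurableSet_Ioi]
    exact hexp i u hu
  by_cases ha : 0 < a
  · have hIci : ν (Set.Ici a) = ENNReal.ofReal (Real.exp (-μ * a)) := by
      have hseq : Set.Ici a = ⋂ m : ℕ, Set.Ioi (max 0 (a - 1 / (m + 1))) := by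
        ext y
        simp only [Set.mem_Ici, Set.mem_iInter, Set.mem_Ioi, lt_max_iff, max_lt_iff]
        constructor
        · intro hy m
          constructor
          · exact lt_of_lt_of_le ha hy
          · have : (0:ℝ) < 1 / (m + 1) := by positivity
            linarith
        · intro h
          by_contra hc
          push_neg at hc
          obtain ⟨m, hm⟩ := exists_nat_one_div_lt (by linarith : (0:ℝ) < a - y)
          have := (h m).2
          linarith [hm]
      have htend : Filter.Tendsto (fun m : ℕ => ν (Set.Ioi (max 0 (a - 1 / (m + 1)))))
          Filter.atTop (nhds (ENNReal.ofReal (Real.exp (-μ * a)))) := by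
        have h1 : Filter.Tendsto (fun m : ℕ => a - 1 / ((m : ℝ) + 1)) Filter.atTop
            (nhds a) := by
          have := tendsto_one_div_add_atTop_nhds_zero_nat (𝕜 := ℝ)
          have := Filter.Tendsto.const_sub a this
          simpa using this
        have h2 : Filter.Tendsto (fun m : ℕ => max 0 (a - 1 / ((m : ℝ) + 1))) Filter.atTop
            (nhds a) := by
          have := Filter.Tendsto.max (tendsto_const_nhds (x := (0:ℝ))) h1
          rwa [max_eq_right ha.le] at this
        have h3 : Filter.Tendsto (fun m : ℕ =>
            ENNReal.ofReal (Real.exp (-μ * max 0 (a - 1 / ((m : ℝ) + 1))))) Filter.atTop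
            (nhds (ENNReal.ofReal (Real.exp (-μ * a)))) := by
          apply (ENNReal.continuous_ofReal.tendsto _).comp
          apply (Real.continuous_exp.tendsto _).comp
          exact h2.const_mul _
        have heq : ∀ m : ℕ, ν (Set.Ioi (max 0 (a - 1 / ((m : ℝ) + 1))))
            = ENNReal.ofReal (Real.exp (-μ * max 0 (a - 1 / ((m : ℝ) + 1)))) := by
          intro m
          exact hIoi _ (le_max_left _ _)
        simp only [heq]
        exact h3
      have htend2 : Filter.Tendsto (fun m : ℕ => ν (Set.Ioi (max 0 (a - 1 / (m + 1)))))
          Filter.atTop (nhds (ν (⋂ m : ℕ, Set.Ioi (max 0 (a - 1 / (m + 1)))))) := by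
        apply tendsto_measure_iInter_atTop
        · intro m
          exact (measurableSet_Ioi).nullMeasurableSet
        · intro m l hml
          apply Set.Ioi_subset_Ioi
          apply max_le_max le_rfl
          have hinv : 1 / ((l:ℝ) + 1) ≤ 1 / ((m:ℝ) + 1) := by
            apply one_div_le_one_div_of_le
            · positivity
            · exact_mod_cast by omega
          linarith
        · exact ⟨0, measure_ne_top _ _⟩
      rw [hseq]
      exact tendsto_nhds_unique htend2 htend
    have hdecomp : ν {a} + ν (Set.Ioi a) = ν (Set.Ici a) := by
      rw [← measure_union (by simp [Set.disjoint_left]) measurableSet_Ioi]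
      congr 1
      ext y
      simp only [Set.mem_union, Set.mem_singleton_iff, Set.mem_Ioi, Set.mem_Ici]
      constructor
      · rintro (rfl | h)
        · exact le_rfl
        · exact h.le
      · intro h
        rcases eq_or_lt_of_le h with h' | h'
        · exact Or.inl h'.symm
        · exact Or.inr h'
    have key : ν (Set.Ici a) = ν (Set.Ioi a) := by rw [hIci, hIoi a ha.le]
    have h0 : ν (Set.Ioi a) + ν {a} ≤ ν (Set.Ioi a) + 0 := by
      rw [add_zero, add_comm, hdecomp, key]
    exact le_antisymm ((ENNReal.cancel_of_ne (measure_ne_top _ _)) h0) zero_le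
  · push_neg at ha
    have h1 : ν (Set.Iic 0) = 0 := by
      have := map_Iic hμ hmeas hexp i 0
      rw [← hν] at this
      simp only [le_rfl, if_pos] at this
      rw [this]
      simp [Real.exp_zero]
    exact measure_mono_null (by intro y hy; simp at hy; simp [hy, ha]) h1

lemma tie_null (hμ : 0 < μ) (hmeas : ∀ i, Measurable (T i))
    (hindep : iIndepFun T Pr)
    (hexp : ∀ (i : Fin n) (t : ℝ), 0 ≤ t →
      Pr {ω | t < T i ω} = ENNReal.ofReal (Real.exp (-μ * t)))
    (i j : Fin n) (hij : i ≠ j) :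
    Pr {ω | T i ω = T j ω} = 0 := by
  haveI : IsProbabilityMeasure (Measure.map (T j) Pr) :=
    Measure.isProbabilityMeasure_map (hmeas j).aemeasurable
  have hprod : Measure.map (fun ω => (T i ω, T j ω)) Pr
      = (Measure.map (T i) Pr).prod (Measure.map (T j) Pr) :=
    ((indepFun_iff_map_prod_eq_prod_map_map (hmeas i).aemeasurable
      (hmeas j).aemeasurable).mp (hindep.indepFun hij))
  have hdiagmeas : MeasurableSet {p : ℝ × ℝ | p.1 = p.2} :=
    measurableSet_eq_fun measurable_fst measurable_snd
  have heq : {ω | T i ω = T j ω} = (fun ω => (T i ω, T j ω)) ⁻¹' {p | p.1 = p.2} := rfl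
  rw [heq, ← Measure.map_apply ((hmeas i).prodMk (hmeas j)) hdiagmeas, hprod,
    Measure.prod_apply hdiagmeas]
  have hz : ∀ a : ℝ, (Measure.map (T j) Pr) (Prod.mk a ⁻¹' {p : ℝ × ℝ | p.1 = p.2}) = 0 := by
    intro a
    have : (Prod.mk a ⁻¹' {p : ℝ × ℝ | p.1 = p.2}) = {a} := by
      ext b; simp [eq_comm]
    rw [this]
    exact no_atoms hμ hmeas hexp j a
  simp only [hz]
  simp

lemma pos_null (hmeas : ∀ i, Measurable (T i))
    (hexp : ∀ (i : Fin n) (t : ℝ), 0 ≤ t →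
      Pr {ω | t < T i ω} = ENNReal.ofReal (Real.exp (-μ * t)))
    (i : Fin n) : Pr {ω | T i ω ≤ 0} = 0 := by
  have h1 : Pr {ω | (0:ℝ) < T i ω} = 1 := by
    rw [hexp i 0 le_rfl]; simp
  have h2 : {ω | T i ω ≤ 0} = {ω | (0:ℝ) < T i ω}ᶜ := by
    ext ω; simp [not_lt]
  have hms : MeasurableSet {ω | (0:ℝ) < T i ω} := (hmeas i) measurableSet_Ioi
  rw [h2, measure_compl hms (measure_ne_top _ _), h1, measure_univ, tsub_self]

end Prob

end Stmt15aux

open scoped ENNReal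

/-- Expected first-cycle cost under the `r`-out-of-`n`:R policy for a semi-coherent
system with i.i.d. exponential component lifetimes:
`E[c_cmp(N(T_rep)) + c_sys·1{T_fail ≤ T_{r:n}}]
  = Σ_{k=1}^{r} s_k (c_sys + c_cmp k) + (Σ_{k=r+1}^{n} s_k) c_cmp r`,
where `T_rep = min{T_fail, T_{r:n}}` and `N(T_rep) = #{i : T_i ≤ T_rep}`. -/
theorem stmt15 {Ω : Type*} [MeasurableSpace Ω] (Pr : Measure Ω) [IsProbabilityMeasure Pr]
    (n : ℕ) (hn : 1 ≤ n) (Φ : (Fin n → Bool) → Bool)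
    (hmono : ∀ x y : Fin n → Bool, (∀ i, x i ≤ y i) → Φ x ≤ Φ y)
    (hΦ0 : Φ (fun _ => false) = false) (hΦ1 : Φ (fun _ => true) = true)
    (μ : ℝ) (hμ : 0 < μ)
    (T : Fin n → Ω → ℝ)
    (hmeas : ∀ i, Measurable (T i))
    (hindep : iIndepFun T Pr)
    (hexp : ∀ (i : Fin n) (t : ℝ), 0 ≤ t →
      Pr {ω | t < T i ω} = ENNReal.ofReal (Real.exp (-μ * t)))
    (r : ℕ) (hr1 : 1 ≤ r) (hrn : r ≤ n)
    (ccmp : ℕ → ℝ) (csys : ℝ) :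
    ∫ ω,
        (ccmp ((Finset.univ.filter (fun i : Fin n =>
            T i ω ≤ min (failTime n Φ (fun i' => T i' ω))
              (orderStat n (fun i' => T i' ω) ⟨r - 1, by omega⟩))).card) +
          csys * (if failTime n Φ (fun i' => T i' ω) ≤
              orderStat n (fun i' => T i' ω) ⟨r - 1, by omega⟩ then (1 : ℝ) else 0)) ∂Pr =
      (∑ k ∈ Finset.Icc 1 r, structSig n Φ k * (csys + ccmp k)) +
        (∑ k ∈ Finset.Icc (r + 1) n, structSig n Φ k) * ccmp r := by
  classical
  have i₀ : Fin n := ⟨0, by omega⟩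
  set ν := Measure.map (T i₀) Pr with hν
  haveI : IsProbabilityMeasure ν := Measure.isProbabilityMeasure_map (hmeas i₀).aemeasurable
  set C : Set (Fin n → ℝ) := {y | StrictMono y} with hC
  have hCmeas : MeasurableSet C := by
    have hCeq : C = ⋂ (p : Fin n × Fin n), ⋂ (_ : p.1 < p.2),
        {y : Fin n → ℝ | y p.1 < y p.2} := by
      ext y
      simp only [hC, Set.mem_setOf_eq, Set.mem_iInter]
      constructor
      · intro h p hp; exact h hp
      · intro h a b hab; exact h (a, b) hab
    rw [hCeq]
    exact MeasurableSet.iInter (fun p => MeasurableSet.iInter (fun hp =>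
      measurableSet_lt (measurable_pi_apply _) (measurable_pi_apply _)))
  set B : Equiv.Perm (Fin n) → Set Ω :=
    fun π => (fun ω (i : Fin n) => T (π i) ω) ⁻¹' C with hB
  have hBmem : ∀ (π : Equiv.Perm (Fin n)) (ω : Ω),
      ω ∈ B π ↔ StrictMono ((fun i' => T i' ω) ∘ π) := by
    intro π ω; exact Iff.rfl
  have hBmeas : ∀ π, MeasurableSet (B π) := fun π =>
    (measurable_pi_lambda _ (fun i => hmeas (π i))) hCmeas
  have hBval : ∀ π, Pr (B π) = Measure.pi (fun _ : Fin n => ν) C := by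
    intro π
    rw [hB]
    rw [← Measure.map_apply (measurable_pi_lambda _ (fun i => hmeas (π i))) hCmeas,
      Stmt15aux.joint_law hμ hmeas hindep hexp i₀ π]
  have hdisj : ∀ π π' : Equiv.Perm (Fin n), π ≠ π' → ∀ ω, ω ∈ B π → ω ∉ B π' := by
    intro π π' hne ω h1 h2
    apply hne
    have hsm1 : StrictMono ((fun i' => T i' ω) ∘ π) := (hBmem π ω).mp h1
    have hsm2 : StrictMono ((fun i' => T i' ω) ∘ π') := (hBmem π' ω).mp h2
    set x : Fin n → ℝ := fun i' => T i' ω with hx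
    have hc1 : x ∘ π = x ∘ Tuple.sort x :=
      Tuple.comp_sort_eq_comp_iff_monotone.mpr hsm1.monotone
    have hc2 : x ∘ π' = x ∘ Tuple.sort x :=
      Tuple.comp_sort_eq_comp_iff_monotone.mpr hsm2.monotone
    have hxinj : Function.Injective x := by
      intro a b hab
      have h3 : (x ∘ π) (π.symm a) = (x ∘ π) (π.symm b) := by
        simp only [Function.comp_apply, Equiv.apply_symm_apply]
        exact hab
      exact π.symm.injective (hsm1.injective h3)
    apply Equiv.ext
    intro k
    exact hxinj (congrFun (hc1.trans hc2.symm) k)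
  have hties : Pr (⋃ π : Equiv.Perm (Fin n), B π)ᶜ = 0 := by
    have hsub : (⋃ π : Equiv.Perm (Fin n), B π)ᶜ ⊆
        ⋃ (p : Fin n × Fin n), ⋃ (_ : p.1 ≠ p.2), {ω | T p.1 ω = T p.2 ω} := by
      intro ω hω
      simp only [Set.mem_compl_iff, Set.mem_iUnion, not_exists] at hω
      by_contra hc
      simp only [Set.mem_iUnion, Set.mem_setOf_eq, not_exists] at hc
      set x : Fin n → ℝ := fun i' => T i' ω with hx
      have hxinj : Function.Injective x := by
        intro a b hab
        by_contra hne
        exact hc (a, b) hne hab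
      have hsm : StrictMono (x ∘ Tuple.sort x) :=
        (Tuple.monotone_sort x).strictMono_of_injective
          (hxinj.comp (Equiv.injective _))
      exact hω (Tuple.sort x) hsm
    refine measure_mono_null hsub (measure_iUnion_null (fun p => measure_iUnion_null (fun hp =>
      Stmt15aux.tie_null hμ hmeas hindep hexp p.1 p.2 hp)))
  have hUmeas : MeasurableSet (⋃ π : Equiv.Perm (Fin n), B π) := MeasurableSet.iUnion hBmeas
  have hU1 : Pr (⋃ π : Equiv.Perm (Fin n), B π) = 1 := (prob_compl_eq_zero_iff hUmeas).mp hties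
  have hsumB : ∑' π : Equiv.Perm (Fin n), Pr (B π) = 1 := by
    rw [← measure_iUnion ?_ hBmeas, hU1]
    intro π π' hne
    show Disjoint (B π) (B π')
    rw [Set.disjoint_left]
    exact fun ω h1 => hdisj π π' hne ω h1
  have hfacpos : (0:ℝ) < (Nat.factorial n : ℝ) := by positivity
  have hPrB : ∀ π : Equiv.Perm (Fin n), (Pr (B π)).toReal = ((Nat.factorial n : ℝ))⁻¹ := by
    intro π
    have hconst : ∀ π' : Equiv.Perm (Fin n), Pr (B π') = Pr (B π) := fun π' => by
      rw [hBval, hBval]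
    have hsum2 : (Fintype.card (Equiv.Perm (Fin n)) : ℝ≥0∞) * Pr (B π) = 1 := by
      rw [← hsumB, tsum_fintype, Finset.sum_congr rfl (fun π' _ => hconst π'),
        Finset.sum_const, Finset.card_univ, nsmul_eq_mul]
    rw [Fintype.card_perm, Fintype.card_fin] at hsum2
    have htr := congrArg ENNReal.toReal hsum2
    rw [ENNReal.toReal_mul, ENNReal.toReal_natCast, ENNReal.toReal_one] at htr
    field_simp
    linarith
  have hPosnull : Pr {ω | ¬ ∀ i, 0 < T i ω} = 0 := by
    have hsub : {ω | ¬ ∀ i, 0 < T i ω} ⊆ ⋃ i, {ω | T i ω ≤ 0} := by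
      intro ω hω
      simp only [Set.mem_setOf_eq, not_forall, not_lt] at hω
      obtain ⟨i, hi⟩ := hω
      exact Set.mem_iUnion.mpr ⟨i, hi⟩
    exact measure_mono_null hsub
      (measure_iUnion_null (fun i => Stmt15aux.pos_null hmeas hexp i))
  have hae : (fun ω =>
        (ccmp ((Finset.univ.filter (fun i : Fin n =>
            T i ω ≤ min (failTime n Φ (fun i' => T i' ω))
              (orderStat n (fun i' => T i' ω) ⟨r - 1, by omega⟩))).card) +
          csys * (if failTime n Φ (fun i' => T i' ω) ≤
              orderStat n (fun i' => T i' ω) ⟨r - 1, by omega⟩ then (1 : ℝ) else 0)))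
      =ᵐ[Pr] (fun ω => ∑ π : Equiv.Perm (Fin n),
        Set.indicator (B π) (fun _ => if Stmt15aux.Kp n Φ π ≤ r
          then csys + ccmp (Stmt15aux.Kp n Φ π) else ccmp r) ω) := by
    have hnull : Pr ({ω | ¬ ∀ i, 0 < T i ω} ∪ (⋃ π : Equiv.Perm (Fin n), B π)ᶜ) = 0 :=
      measure_union_null hPosnull hties
    have h1 : ∀ᵐ ω ∂Pr,
        ω ∉ ({ω | ¬ ∀ i, 0 < T i ω} ∪ (⋃ π : Equiv.Perm (Fin n), B π)ᶜ) := by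
      rw [ae_iff]
      refine measure_mono_null (fun a ha => ?_) hnull
      exact not_not.mp ha
    filter_upwards [h1] with ω hω
    simp only [Set.mem_union, Set.mem_compl_iff, Set.mem_setOf_eq, not_or, not_not] at hω
    obtain ⟨hpos, hU⟩ := hω
    obtain ⟨π, hπ⟩ := Set.mem_iUnion.mp hU
    have hsm : StrictMono ((fun i' => T i' ω) ∘ π) := (hBmem π ω).mp hπ
    have hgval : (∑ π' : Equiv.Perm (Fin n),
        Set.indicator (B π') (fun _ => if Stmt15aux.Kp n Φ π' ≤ r
          then csys + ccmp (Stmt15aux.Kp n Φ π') else ccmp r) ω)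
        = (if Stmt15aux.Kp n Φ π ≤ r then csys + ccmp (Stmt15aux.Kp n Φ π) else ccmp r) := by
      rw [Finset.sum_eq_single_of_mem π (Finset.mem_univ π)]
      · exact Set.indicator_of_mem hπ _
      · intro π' _ hne
        exact Set.indicator_of_notMem (hdisj π π' (Ne.symm hne) ω hπ) _
    rw [hgval]
    exact Stmt15aux.cost_eq hn hmono hΦ0 hΦ1 hsm hpos r hr1 hrn ccmp csys
  rw [integral_congr_ae hae]
  rw [integral_finset_sum _ (fun π _ => (integrable_const _).indicator (hBmeas π))]
  have hint : ∀ π : Equiv.Perm (Fin n),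
      ∫ ω, Set.indicator (B π) (fun _ => if Stmt15aux.Kp n Φ π ≤ r
          then csys + ccmp (Stmt15aux.Kp n Φ π) else ccmp r) ω ∂Pr
      = ((Nat.factorial n : ℝ))⁻¹ *
          (if Stmt15aux.Kp n Φ π ≤ r then csys + ccmp (Stmt15aux.Kp n Φ π) else ccmp r) := by
    intro π
    rw [integral_indicator_const _ (hBmeas π), measureReal_def, hPrB π, smul_eq_mul]
  rw [Finset.sum_congr rfl (fun π _ => hint π)]
  have hmapsto : ∀ π ∈ (Finset.univ : Finset (Equiv.Perm (Fin n))),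
      Stmt15aux.Kp n Φ π ∈ Finset.Icc 1 n := by
    intro π _
    exact Finset.mem_Icc.mpr ⟨(Stmt15aux.Kp_mem π hn hΦ0).1, Stmt15aux.Kp_le_n π hn hΦ0⟩
  rw [← Finset.sum_fiberwise_of_maps_to hmapsto (fun π =>
    ((Nat.factorial n : ℝ))⁻¹ *
      (if Stmt15aux.Kp n Φ π ≤ r then csys + ccmp (Stmt15aux.Kp n Φ π) else ccmp r))]
  have hinner : ∀ k ∈ Finset.Icc 1 n,
      (∑ π ∈ Finset.univ.filter (fun π : Equiv.Perm (Fin n) => Stmt15aux.Kp n Φ π = k),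
        ((Nat.factorial n : ℝ))⁻¹ *
          (if Stmt15aux.Kp n Φ π ≤ r then csys + ccmp (Stmt15aux.Kp n Φ π) else ccmp r))
      = structSig n Φ k * (if k ≤ r then csys + ccmp k else ccmp r) := by
    intro k hk
    obtain ⟨hk1, hkn⟩ := Finset.mem_Icc.mp hk
    rw [Finset.sum_congr rfl (fun π hπ => by
      rw [(Finset.mem_filter.mp hπ).2])]
    rw [Finset.sum_const, nsmul_eq_mul]
    rw [show ((Finset.univ.filter (fun π : Equiv.Perm (Fin n) =>
        Stmt15aux.Kp n Φ π = k)).card : ℝ)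
      = structSig n Φ k * (Nat.factorial n) from
        Stmt15aux.card_Kp_eq n Φ hn hmono hΦ0 hΦ1 k hk1 hkn]
    field_simp
  rw [Finset.sum_congr rfl hinner]
  have hIcc0 : Finset.Icc 1 n = Finset.Ioc 0 n := by ext a; simp; omega
  have hIcc1 : Finset.Icc 1 r = Finset.Ioc 0 r := by ext a; simp; omega
  have hIcc2 : Finset.Icc (r+1) n = Finset.Ioc r n := by ext a; simp
  rw [hIcc0, hIcc1, hIcc2]
  rw [← Finset.sum_Ioc_consecutive
    (fun k => structSig n Φ k * (if k ≤ r then csys + ccmp k else ccmp r))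
    (Nat.zero_le r) hrn]
  congr 1
  · apply Finset.sum_congr rfl
    intro k hk
    obtain ⟨hk1, hk2⟩ := Finset.mem_Ioc.mp hk
    rw [if_pos hk2]
  · rw [Finset.sum_mul]
    apply Finset.sum_congr rfl
    intro k hk
    obtain ⟨hk1, hk2⟩ := Finset.mem_Ioc.mp hk
    rw [if_neg (by omega)]
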